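/- ABC derivative of the power series ansatz: if f(t) = Σ_{k=0}^∞ a_k t^{kα} converges with suitable growth conditions (0 < α < 1), then ^{ABC}D^α_{0+} f(t) = Σ_{m=1}^∞ [ (B(α)/(1-α)) Σ_{k=1}^m a_k (-α/(1-α))^{m-k} Γ(kα+1)/Γ(mα+1) ] t^{mα}. -/

import Mathlib

open Real MeasureTheory Filter

/-- Mittag-Leffler function `E_α(z) = Σ z^n / Γ(αn+1)`. -/
noncomputable def mittagLeffler (α z : ℝ) : ℝ :=
  ∑' n : ℕ, z ^ n / Real.Gamma (α * n + 1)

/-- Riemann–Liouville fractional integral of order `β ≥ 0` with base point `a`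
(the identity for `β = 0`). -/
noncomputable def RL (a β : ℝ) (f : ℝ → ℝ) (t : ℝ) : ℝ :=
  if β = 0 then f t
  else (1 / Real.Gamma β) * ∫ τ in a..t, (t - τ) ^ (β - 1) * f τ

/-- ABR (Atangana–Baleanu, Riemann–Liouville type) fractional derivative,
with normalisation value `B = B(α)`. -/
noncomputable def ABR (B a α : ℝ) (f : ℝ → ℝ) (t : ℝ) : ℝ :=
  (B / (1 - α)) *
    deriv (fun s => ∫ x in a..s, f x * mittagLeffler α (-α / (1 - α) * (s - x) ^ α)) t

/-- ABC (Atangana–Baleanu, Caputo type) fractional derivative. -/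
noncomputable def ABC (B a α : ℝ) (f : ℝ → ℝ) (t : ℝ) : ℝ :=
  (B / (1 - α)) *
    ∫ x in a..t, deriv f x * mittagLeffler α (-α / (1 - α) * (t - x) ^ α)

/-- AB fractional integral. -/
noncomputable def ABI (B a α : ℝ) (f : ℝ → ℝ) (t : ℝ) : ℝ :=
  ((1 - α) / B) * f t + (α / B) * RL a α f t


lemma beta_real {p q T : ℝ} (hp : 0 < p) (hq : 0 < q) (hT : 0 < T) :
    ∫ x in (0:ℝ)..T, x ^ (p-1) * (T - x) ^ (q-1)
      = Real.Gamma p * Real.Gamma q / Real.Gamma (p+q) * T ^ (p+q-1) := by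
  have hcoe : ((∫ x in (0:ℝ)..T, x ^ (p-1) * (T - x) ^ (q-1) : ℝ) : ℂ)
      = ∫ x : ℝ in (0:ℝ)..T, (x:ℂ) ^ ((p:ℂ)-1) * ((T:ℂ) - x) ^ ((q:ℂ)-1) := by
    rw [← intervalIntegral.integral_ofReal]
    apply intervalIntegral.integral_congr
    intro x hx
    rw [Set.uIcc_of_le hT.le] at hx
    have hx0 : (0:ℝ) ≤ x := hx.1
    have hx1 : (0:ℝ) ≤ T - x := by linarith [hx.2]
    simp only [Complex.ofReal_mul]
    rw [Complex.ofReal_cpow hx0, Complex.ofReal_cpow hx1]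
    push_cast
    ring
  have hscaled := Complex.betaIntegral_scaled (p:ℂ) (q:ℂ) hT
  have hgam := Complex.Gamma_mul_Gamma_eq_betaIntegral
    (s := (p:ℂ)) (t := (q:ℂ)) (by simpa using hp) (by simpa using hq)
  have hΓpq : Complex.Gamma ((p:ℂ) + q) ≠ 0 := by
    rw [show ((p:ℂ) + q) = ((p+q:ℝ):ℂ) by push_cast; ring, Complex.Gamma_ofReal]
    exact_mod_cast (Real.Gamma_pos_of_pos (by linarith)).ne'
  have hbeta : Complex.betaIntegral (p:ℂ) (q:ℂ)
      = Complex.Gamma p * Complex.Gamma q / Complex.Gamma ((p:ℂ)+q) := by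
    rw [hgam]; field_simp
  have : ((∫ x in (0:ℝ)..T, x ^ (p-1) * (T - x) ^ (q-1) : ℝ) : ℂ)
      = ((Real.Gamma p * Real.Gamma q / Real.Gamma (p+q) * T ^ (p+q-1) : ℝ) : ℂ) := by
    rw [hcoe, hscaled, hbeta]
    rw [show ((p:ℂ) + q - 1) = ((p+q-1:ℝ):ℂ) by push_cast; ring, ← Complex.ofReal_cpow hT.le]
    rw [show Complex.Gamma ((p:ℂ) + q) = ((Real.Gamma (p+q) : ℝ):ℂ) from by
      rw [show ((p:ℂ) + q) = ((p+q:ℝ):ℂ) by push_cast; ring, Complex.Gamma_ofReal]]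
    push_cast [Complex.Gamma_ofReal]
    ring
  exact_mod_cast this


lemma Gamma_mul_le {p q : ℝ} (hp : 0 ≤ p) (hq : 0 ≤ q) :
    Real.Gamma (p+1) * Real.Gamma (q+1) ≤ (p+q+1) * Real.Gamma (p+q+1) := by
  have h := beta_real (p := p+1) (q := q+1) (T := 1)
    (by linarith) (by linarith) one_pos
  simp only [add_sub_cancel_right] at h
  have hcont : Continuous fun x : ℝ => x ^ p * (1 - x) ^ q := by
    have h1 : Continuous fun x : ℝ => x ^ p :=
      continuous_iff_continuousAt.2 fun x => Real.continuousAt_rpow_const x p (Or.inr hp)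
    have h2 : Continuous fun x : ℝ => (1 - x) ^ q :=
      (continuous_iff_continuousAt.2 fun x => Real.continuousAt_rpow_const x q (Or.inr hq)).comp
        (continuous_const.sub continuous_id)
    exact h1.mul h2
  have hle : (∫ x in (0:ℝ)..1, x ^ p * (1 - x) ^ q) ≤ ∫ _x in (0:ℝ)..1, (1:ℝ) := by
    apply intervalIntegral.integral_mono_on zero_le_one
      (hcont.intervalIntegrable _ _) intervalIntegrable_const
    intro x hx
    have h1 : x ^ p ≤ 1 := Real.rpow_le_one hx.1 hx.2 hp
    have h2 : (1 - x) ^ q ≤ 1 := Real.rpow_le_one (by linarith [hx.2]) (by linarith [hx.1]) hq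
    calc x ^ p * (1 - x) ^ q ≤ 1 * 1 :=
          mul_le_mul h1 h2 (Real.rpow_nonneg (by linarith [hx.2]) _) zero_le_one
      _ = 1 := by ring
  rw [h] at hle
  simp only [intervalIntegral.integral_const, smul_eq_mul, sub_zero, mul_one,
    Real.one_rpow] at hle
  have h2 : Real.Gamma (p+1+(q+1)) = (p+q+1) * Real.Gamma (p+q+1) := by
    rw [show p+1+(q+1) = (p+q+1)+1 by ring, Real.Gamma_add_one (by positivity)]
  have hΓ : 0 < Real.Gamma (p+1+(q+1)) := Real.Gamma_pos_of_pos (by linarith)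
  rw [div_le_one hΓ] at hle
  calc Real.Gamma (p+1) * Real.Gamma (q+1) ≤ Real.Gamma (p+1+(q+1)) := hle
    _ = (p+q+1) * Real.Gamma (p+q+1) := h2

lemma gamma_ratio_le {α x : ℝ} (hα0 : 0 < α) (hα1 : α < 1) (hx : 0 < x) :
    Real.Gamma x / Real.Gamma (x+α) ≤ (x+α) ^ (1-α) / x := by
  have hxα : (0:ℝ) < x + α := by linarith
  have hΓx : 0 < Real.Gamma x := Real.Gamma_pos_of_pos hx
  have hΓxα : 0 < Real.Gamma (x+α) := Real.Gamma_pos_of_pos hxα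
  have hconv := Real.convexOn_log_Gamma.2 (Set.mem_Ioi.2 hxα)
    (Set.mem_Ioi.2 (show (0:ℝ) < x+α+1 by linarith)) hα0.le
    (show (0:ℝ) ≤ 1-α by linarith) (show α + (1-α) = 1 by ring)
  have hcomb : α • (x+α) + (1-α) • (x+α+1) = x + 1 := by
    simp only [smul_eq_mul]; ring
  rw [hcomb] at hconv
  simp only [Function.comp_apply, smul_eq_mul] at hconv
  -- hconv : log Γ(x+1) ≤ α * log Γ(x+α) + (1-α) * log Γ(x+α+1)
  have e1 : Real.log (Real.Gamma (x+1)) = Real.log x + Real.log (Real.Gamma x) := by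
    rw [Real.Gamma_add_one hx.ne', Real.log_mul hx.ne' hΓx.ne']
  have e2 : Real.log (Real.Gamma (x+α+1)) = Real.log (x+α) + Real.log (Real.Gamma (x+α)) := by
    rw [Real.Gamma_add_one hxα.ne', Real.log_mul hxα.ne' hΓxα.ne']
  rw [e1, e2] at hconv
  -- log x + log Γ x ≤ log Γ(x+α) + (1-α) log(x+α)
  have hkey : Real.log x + Real.log (Real.Gamma x)
      ≤ Real.log (Real.Gamma (x+α)) + (1-α) * Real.log (x+α) := by nlinarith
  have hexp := Real.exp_le_exp.2 hkey
  rw [Real.exp_add, Real.exp_add, Real.exp_log hx, Real.exp_log hΓx,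
    Real.exp_log hΓxα] at hexp
  have hpow : Real.exp ((1-α) * Real.log (x+α)) = (x+α) ^ (1-α) := by
    rw [Real.rpow_def_of_pos hxα, mul_comm]
  rw [hpow] at hexp
  -- x * Γ x ≤ Γ(x+α) * (x+α)^(1-α)
  rw [div_le_div_iff₀ hΓxα hx]
  nlinarith [Real.rpow_nonneg hxα.le (1-α)]

lemma gamma_ratio_tendsto {α : ℝ} (hα0 : 0 < α) (hα1 : α < 1) :
    Tendsto (fun n : ℕ => Real.Gamma (α*n+1) / Real.Gamma (α*n+1+α)) atTop (nhds 0) := by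
  have hx : ∀ n : ℕ, (0:ℝ) < α*n+1 := fun n => by positivity
  apply squeeze_zero (fun n => by positivity)
    (g := fun n : ℕ => 2 ^ (1-α) * (α*n+1) ^ (-α))
  · intro n
    set x := α*(n:ℝ)+1 with hxdef
    have hx1 : (1:ℝ) ≤ x := by
      have : (0:ℝ) ≤ α*(n:ℝ) := by positivity
      simp only [hxdef]; linarith
    have h1 : Real.Gamma x / Real.Gamma (x+α) ≤ (x+α) ^ (1-α) / x :=
      gamma_ratio_le hα0 hα1 (hx n)
    have h2 : (x+α) ^ (1-α) ≤ 2 ^ (1-α) * x ^ (1-α) := by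
      rw [← Real.mul_rpow two_pos.le (by linarith : (0:ℝ) ≤ x)]
      exact Real.rpow_le_rpow (by linarith) (by linarith) (by linarith)
    have h3 : (x+α) ^ (1-α) / x ≤ 2 ^ (1-α) * x ^ (-α) := by
      rw [div_le_iff₀ (hx n)]
      calc (x+α) ^ (1-α) ≤ 2 ^ (1-α) * x ^ (1-α) := h2
        _ = 2 ^ (1-α) * x ^ (-α) * x := by
            rw [mul_assoc, show x ^ (-α) * x = x ^ (-α) * x ^ (1:ℝ) by rw [Real.rpow_one],
              ← Real.rpow_add (hx n), show -α + (1:ℝ) = 1 - α by ring]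
    exact h1.trans h3
  · have hto : Tendsto (fun n : ℕ => α*(n:ℝ)+1) atTop atTop :=
      tendsto_atTop_add_const_right _ 1
        (Tendsto.const_mul_atTop hα0 tendsto_natCast_atTop_atTop)
    have := (tendsto_rpow_neg_atTop hα0).comp hto
    simpa using this.const_mul (2 ^ (1-α))


lemma summable_P {α b : ℝ} {a : ℕ → ℝ} (hα0 : 0 < α)
    (hconv : ∀ t ∈ Set.Ioo (0:ℝ) b, Summable fun k : ℕ => a k * t ^ (α * k))
    {r ρ : ℝ} (hr : 0 ≤ r) (hrρ : r < ρ) (hρ0 : 0 < ρ) (hρ : ρ < b) :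
    Summable (fun k : ℕ => |a k| * ((k:ℝ)+1) * r ^ (α * k)) := by
  have hsum := hconv ρ ⟨hρ0, hρ⟩
  obtain ⟨M, hM⟩ := hsum.tendsto_atTop_zero.norm.bddAbove_range
  set q : ℝ := r ^ α / ρ ^ α with hq
  have hρα : (0:ℝ) < ρ ^ α := Real.rpow_pos_of_pos hρ0 α
  have hrα : (0:ℝ) ≤ r ^ α := Real.rpow_nonneg hr α
  have hq0 : 0 ≤ q := div_nonneg hrα hρα.le
  have hq1 : q < 1 := by
    rw [hq, div_lt_one hρα]
    exact Real.rpow_lt_rpow hr hrρ hα0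
  have hrk : ∀ k : ℕ, r ^ (α * k) = (r ^ α) ^ k := fun k => by
    rw [Real.rpow_mul hr, Real.rpow_natCast]
  have hρk : ∀ k : ℕ, ρ ^ (α * k) = (ρ ^ α) ^ k := fun k => by
    rw [Real.rpow_mul hρ0.le, Real.rpow_natCast]
  have hbound : ∀ k : ℕ, |a k| * ((k:ℝ)+1) * r ^ (α * k) ≤ M * (((k:ℝ)+1) * q ^ k) := by
    intro k
    have h1 : |a k| * (ρ ^ α) ^ k ≤ M := by
      have := hM ⟨k, rfl⟩
      simp only [norm_mul, Real.norm_eq_abs, hρk k,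
        abs_of_nonneg (pow_nonneg hρα.le k)] at this
      exact this
    have h2 : (r ^ α) ^ k = (ρ ^ α) ^ k * q ^ k := by
      rw [hq, div_pow]; field_simp
    calc |a k| * ((k:ℝ)+1) * r ^ (α * k)
        = (|a k| * (ρ ^ α) ^ k) * q ^ k * ((k:ℝ)+1) := by rw [hrk k, h2]; ring
      _ ≤ M * q ^ k * ((k:ℝ)+1) := by
          apply mul_le_mul_of_nonneg_right _ (by positivity)
          exact mul_le_mul_of_nonneg_right h1 (pow_nonneg hq0 k)
      _ = M * (((k:ℝ)+1) * q ^ k) := by ring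
  have hgeom : Summable (fun k : ℕ => M * (((k:ℝ)+1) * q ^ k)) := by
    have h1 : Summable (fun k : ℕ => ((k:ℝ))^1 * q ^ k) :=
      summable_pow_mul_geometric_of_norm_lt_one 1 (by rwa [Real.norm_eq_abs, abs_of_nonneg hq0])
    have h2 : Summable (fun k : ℕ => q ^ k) := summable_geometric_of_lt_one hq0 hq1
    have := (h1.add h2).mul_left M
    apply this.congr
    intro k; rw [pow_one]; ring
  exact Summable.of_nonneg_of_le (fun k => by positivity) hbound hgeom

lemma summable_Q {α c T : ℝ} (hα0 : 0 < α) (hα1 : α < 1) (hT : 0 < T) (hc : c ≠ 0) :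
    Summable (fun n : ℕ => ((n:ℝ)+1) * |c| ^ n * T ^ (α*n) / Real.Gamma (α*n+1)) := by
  set Q : ℕ → ℝ := fun n => ((n:ℝ)+1) * |c| ^ n * T ^ (α*n) / Real.Gamma (α*n+1) with hQ
  have hc0 : 0 < |c| := abs_pos.2 hc
  have hQpos : ∀ n, 0 < Q n := fun n => by
    have := Real.Gamma_pos_of_pos (show (0:ℝ) < α*n+1 by positivity)
    have := Real.rpow_pos_of_pos hT (α*n)
    positivity
  apply summable_of_ratio_test_tendsto_lt_one (l := 0) one_pos
    (Eventually.of_forall fun n => (hQpos n).ne')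
  have hratio : ∀ n : ℕ, ‖Q (n+1)‖ / ‖Q n‖
      = (((n:ℝ)+2)/((n:ℝ)+1)) * (|c| * T ^ α) * (Real.Gamma (α*n+1) / Real.Gamma (α*n+1+α)) := by
    intro n
    rw [Real.norm_eq_abs, Real.norm_eq_abs, abs_of_pos (hQpos (n+1)), abs_of_pos (hQpos n)]
    have hΓ1 : (0:ℝ) < Real.Gamma (α*n+1) := Real.Gamma_pos_of_pos (by positivity)
    have hΓ2 : (0:ℝ) < Real.Gamma (α*(n+1)+1) := Real.Gamma_pos_of_pos (by positivity)
    have hTp : (0:ℝ) < T ^ (α*n) := Real.rpow_pos_of_pos hT _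
    have hTe : T ^ (α*((n:ℝ)+1)) = T ^ (α*n) * T ^ α := by
      rw [← Real.rpow_add hT]; ring_nf
    have hΓe : Real.Gamma (α*((n:ℝ)+1)+1) = Real.Gamma (α*n+1+α) := by ring_nf
    simp only [hQ]
    push_cast
    rw [hTe, hΓe]
    have hn1 : ((n:ℝ)+1) ≠ 0 := by positivity
    have hΓ3 : Real.Gamma (α*n+1+α) ≠ 0 := by
      have : (0:ℝ) < Real.Gamma (α*n+1+α) := Real.Gamma_pos_of_pos (by positivity)
      exact this.ne'
    field_simp
    ring
  simp only [hratio]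
  have h1 : Tendsto (fun n : ℕ => ((n:ℝ)+2)/((n:ℝ)+1)) atTop (nhds 1) := by
    have : ∀ n : ℕ, ((n:ℝ)+2)/((n:ℝ)+1) = 1 + 1/((n:ℝ)+1) := by
      intro n; field_simp; ring
    simp only [this]
    have := tendsto_one_div_add_atTop_nhds_zero_nat (𝕜 := ℝ)
    simpa using (tendsto_const_nhds (x := (1:ℝ))).add this
  have := (h1.mul (tendsto_const_nhds (x := |c| * T ^ α))).mul (gamma_ratio_tendsto hα0 hα1)
  simpa using this


lemma deriv_f {α b : ℝ} {f : ℝ → ℝ} {a : ℕ → ℝ} (hα0 : 0 < α) (hα1 : α < 1) (hb : 0 < b)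
    (hf : ∀ t ∈ Set.Ioo (0:ℝ) b, f t = ∑' k : ℕ, a k * t ^ (α * k))
    (hconv : ∀ t ∈ Set.Ioo (0:ℝ) b, Summable fun k : ℕ => a k * t ^ (α * k))
    {x : ℝ} (hx0 : 0 < x) (hxb : x < b) :
    HasDerivAt f (∑' k : ℕ, a k * (α * k) * x ^ (α * k - 1)) x := by
  set l : ℝ := x/2 with hl
  set r : ℝ := (x+b)/2 with hr
  set ρ : ℝ := (x+3*b)/4 with hρdef
  have hl0 : 0 < l := by positivity
  have hxS : x ∈ Set.Ioo l r := ⟨by simp only [hl]; linarith, by simp only [hr]; linarith⟩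
  have hrρ : r < ρ := by simp only [hr, hρdef]; linarith
  have hρb : ρ < b := by simp only [hρdef]; linarith
  have hρ0 : 0 < ρ := by positivity
  have hsub : Set.Ioo l r ⊆ Set.Ioo (0:ℝ) b := fun y hy =>
    ⟨lt_trans hl0 hy.1, by have := hy.2; simp only [hr] at this; linarith⟩
  have hu : Summable (fun k : ℕ => (α/l) * (|a k| * ((k:ℝ)+1) * r ^ (α * k))) :=
    (summable_P hα0 hconv (by positivity) hrρ hρ0 hρb).mul_left _
  have key : HasDerivAt (fun z => ∑' k : ℕ, a k * z ^ (α * k))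
      (∑' k : ℕ, a k * ((α * k) * x ^ (α * k - 1))) x := by
    apply hasDerivAt_tsum_of_isPreconnected hu isOpen_Ioo
      (isPreconnected_Ioo (a := l) (b := r))
      (g := fun k z => a k * z ^ (α * k))
      (g' := fun k y => a k * ((α * k) * y ^ (α * k - 1)))
      (fun k y hy => ((Real.hasDerivAt_rpow_const
        (Or.inl (lt_trans hl0 hy.1).ne')).const_mul (a k)))
      ?_ hxS (hconv x (hsub hxS)) hxS
    intro k y hy
    have hy0 : 0 < y := lt_trans hl0 hy.1
    have hcalc : y ^ (α * k - 1) ≤ r ^ (α * k) / l := by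
      rw [Real.rpow_sub hy0, Real.rpow_one]
      apply div_le_div₀ (Real.rpow_nonneg (by positivity) _)
        (Real.rpow_le_rpow hy0.le hy.2.le (by positivity)) hl0 hy.1.le
    rw [Real.norm_eq_abs, abs_mul, abs_mul]
    rw [abs_of_nonneg (by positivity : (0:ℝ) ≤ α * k),
      abs_of_nonneg (Real.rpow_nonneg hy0.le _)]
    calc |a k| * (α * k * y ^ (α * k - 1)) ≤ |a k| * (α * (k+1) * (r ^ (α * k) / l)) := by
          apply mul_le_mul_of_nonneg_left _ (abs_nonneg _)
          apply mul_le_mul (by nlinarith) hcalc (Real.rpow_nonneg hy0.le _) (by positivity)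
      _ = (α/l) * (|a k| * ((k:ℝ)+1) * r ^ (α * k)) := by field_simp
  have hEq : f =ᶠ[nhds x] (fun z => ∑' k : ℕ, a k * z ^ (α * k)) := by
    filter_upwards [isOpen_Ioo.mem_nhds (show x ∈ Set.Ioo (0:ℝ) b from ⟨hx0, hxb⟩)] with y hy
    exact hf y hy
  have := key.congr_of_eventuallyEq hEq
  have hs : (∑' k : ℕ, a k * (α * k) * x ^ (α * k - 1))
      = ∑' k : ℕ, a k * ((α * k) * x ^ (α * k - 1)) := tsum_congr fun k => by ring
  rw [hs]; exact this


lemma integral_F {α t c : ℝ} (hα0 : 0 < α) (ht : 0 < t) (A : ℝ) {k n : ℕ} (hk : k ≠ 0) :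
    ∫ x in (0:ℝ)..t, (A * (α*k) * x ^ (α*k-1)) * (c^n * (t-x) ^ (α*n) / Real.Gamma (α*n+1))
      = A * c^n * (Real.Gamma (α*k+1) / Real.Gamma (α*(k+n)+1)) * t ^ (α*(k+n)) := by
  have hkp : (0:ℝ) < k := Nat.cast_pos.2 (Nat.pos_of_ne_zero hk)
  have hp : (0:ℝ) < α*k := by positivity
  have hq : (0:ℝ) < α*n+1 := by positivity
  have hrw : (fun x : ℝ => (A * (α*k) * x ^ (α*k-1)) * (c^n * (t-x) ^ (α*n) / Real.Gamma (α*n+1)))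
      = fun x : ℝ => (A * (α*k) * c^n / Real.Gamma (α*n+1)) * (x ^ (α*k-1) * (t-x) ^ (α*n+1-1)) := by
    funext x; rw [add_sub_cancel_right]; ring
  rw [hrw, intervalIntegral.integral_const_mul, beta_real hp hq ht]
  have hE1 : α*(k:ℝ) + (α*(n:ℝ)+1) = α*((k+n : ℕ):ℝ)+1 := by push_cast; ring
  have hE2 : α*(k:ℝ) + (α*(n:ℝ)+1) - 1 = α*((k+n : ℕ):ℝ) := by push_cast; ring
  rw [hE2, hE1]
  have hΓ1 : Real.Gamma (α*k+1) = (α*k) * Real.Gamma (α*k) := Real.Gamma_add_one hp.ne'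
  have hΓ2 : (0:ℝ) < Real.Gamma (α*n+1) := Real.Gamma_pos_of_pos hq
  have hΓ3 : (0:ℝ) < Real.Gamma (α*((k+n:ℕ):ℝ)+1) := Real.Gamma_pos_of_pos (by positivity)
  rw [hΓ1]
  push_cast
  field_simp
  skip

lemma integrable_F {α t c : ℝ} (hα0 : 0 < α) (ht : 0 < t) (A : ℝ) {k n : ℕ} (hk : k ≠ 0) :
    IntervalIntegrable
      (fun x => (A * (α*k) * x ^ (α*k-1)) * (c^n * (t-x) ^ (α*n) / Real.Gamma (α*n+1)))
      volume 0 t := by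
  have hkp : (0:ℝ) < k := Nat.cast_pos.2 (Nat.pos_of_ne_zero hk)
  have h1 : IntervalIntegrable (fun x : ℝ => x ^ (α*k-1)) volume 0 t :=
    intervalIntegral.intervalIntegrable_rpow' (by nlinarith)
  have hcont : Continuous fun x : ℝ => (t-x) ^ (α*n) := by
    have : Continuous fun y : ℝ => y ^ (α*n) :=
      continuous_iff_continuousAt.2 fun y =>
        Real.continuousAt_rpow_const y _ (Or.inr (by positivity))
    exact this.comp (continuous_const.sub continuous_id)
  have h2 := h1.mul_continuousOn (g := fun x => (t-x) ^ (α*n)) hcont.continuousOn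
  have h3 := (h2.const_mul (A * (α*k))).mul_const (c^n / Real.Gamma (α*n+1))
  convert h3 using 1
  funext x
  ring

set_option maxHeartbeats 2000000 in
/-- ABC derivative of the power series ansatz
`f(t) = Σ a_k t^{kα}`. -/
theorem ABC_power_series_ansatz (α b B : ℝ) (f : ℝ → ℝ) (a : ℕ → ℝ)
    (hα0 : 0 < α) (hα1 : α < 1) (hB : 0 < B) (hb : 0 < b)
    (hf : ∀ t ∈ Set.Ioo (0:ℝ) b, f t = ∑' k : ℕ, a k * t ^ (α * k))
    (hconv : ∀ t ∈ Set.Ioo (0:ℝ) b, Summable fun k : ℕ => a k * t ^ (α * k)) :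
    ∀ t ∈ Set.Ioo (0:ℝ) b,
      ABC B 0 α f t
        = ∑' m : ℕ,
            ((B / (1 - α)) * ∑ k ∈ Finset.Icc 1 (m + 1),
              a k * (-α / (1 - α)) ^ (m + 1 - k)
                * (Real.Gamma (k * α + 1) / Real.Gamma ((m + 1) * α + 1)))
              * t ^ (α * (m + 1)) := by
  intro t ht
  obtain ⟨ht0, htb⟩ := ht
  have h1α : (0:ℝ) < 1 - α := by linarith
  set c : ℝ := -α / (1 - α) with hc
  have hcne : c ≠ 0 := div_ne_zero (neg_ne_zero.2 hα0.ne') h1α.ne'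
  set d : ℕ → ℝ → ℝ := fun k x => a k * (α * k) * x ^ (α * k - 1) with hd
  set e : ℕ → ℝ → ℝ :=
    fun n x => c ^ n * (t - x) ^ (α * n) / Real.Gamma (α * n + 1) with he
  set F : ℕ × ℕ → ℝ → ℝ := fun p x => d p.1 x * e p.2 x with hF
  set G : ℕ × ℕ → ℝ := fun p =>
    if p.1 = 0 then 0 else
      a p.1 * c ^ p.2 * (Real.Gamma (α * p.1 + 1) / Real.Gamma (α * (p.1 + p.2 : ℕ) + 1))
        * t ^ (α * ((p.1 + p.2 : ℕ):ℝ)) with hG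
  -- basic summable families
  have hmid0 : (0:ℝ) < (t+b)/2 := by linarith
  have hP' : Summable (fun k : ℕ => |a k| * ((k:ℝ)+1) * t ^ (α * k)) :=
    summable_P hα0 hconv ht0.le (by linarith) hmid0 (by linarith)
  have hQ' : Summable (fun n : ℕ => ((n:ℝ)+1) * |c| ^ n * t ^ (α*n) / Real.Gamma (α*n+1)) :=
    summable_Q hα0 hα1 ht0 hcne
  have hΓpos : ∀ y : ℝ, 0 ≤ y → (0:ℝ) < Real.Gamma (y + 1) := fun y hy =>
    Real.Gamma_pos_of_pos (by linarith)
  -- |G| bounded by product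
  have hGabs : ∀ p : ℕ × ℕ, |G p| ≤
      (|a p.1| * ((p.1:ℝ)+1) * t ^ (α * p.1)) *
      (((p.2:ℝ)+1) * |c| ^ p.2 * t ^ (α*p.2) / Real.Gamma (α*p.2+1)) := by
    rintro ⟨k, n⟩
    by_cases hk : k = 0
    · simp only [hG, hk, if_pos]
      simp only [abs_zero]
      have h1 : (0:ℝ) ≤ t ^ (α * (0:ℕ)) := Real.rpow_nonneg ht0.le _
      positivity
    · simp only [hG, if_neg hk]
      have hΓn : (0:ℝ) < Real.Gamma (α*n+1) := hΓpos _ (by positivity)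
      have hΓk : (0:ℝ) < Real.Gamma (α*k+1) := hΓpos _ (by positivity)
      have hΓkn : (0:ℝ) < Real.Gamma (α*((k+n:ℕ):ℝ)+1) := hΓpos _ (by positivity)
      have htkn : t ^ (α*((k+n:ℕ):ℝ)) = t ^ (α*k) * t ^ (α*n) := by
        rw [← Real.rpow_add ht0]; push_cast; ring_nf
      have hratio : Real.Gamma (α*k+1) / Real.Gamma (α*((k+n:ℕ):ℝ)+1)
          ≤ ((k:ℝ)+1) * ((n:ℝ)+1) / Real.Gamma (α*n+1) := by
        rw [div_le_div_iff₀ hΓkn hΓn]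
        have hmul := Gamma_mul_le (p := α*k) (q := α*n) (by positivity) (by positivity)
        have he1 : α*(k:ℝ) + α*(n:ℝ) + 1 ≤ ((k:ℝ)+1) * ((n:ℝ)+1) := by
          have h1 : α*(k:ℝ) ≤ (k:ℝ) := by nlinarith [(Nat.cast_nonneg k : (0:ℝ) ≤ k)]
          have h2 : α*(n:ℝ) ≤ (n:ℝ) := by nlinarith [(Nat.cast_nonneg n : (0:ℝ) ≤ n)]
          nlinarith [(Nat.cast_nonneg k : (0:ℝ) ≤ k), (Nat.cast_nonneg n : (0:ℝ) ≤ n)]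
        have he2 : Real.Gamma (α*(k:ℝ) + α*(n:ℝ) + 1) = Real.Gamma (α*((k+n:ℕ):ℝ)+1) := by
          push_cast; ring_nf
        have hΓsum : (0:ℝ) < Real.Gamma (α*(k:ℝ) + α*(n:ℝ) + 1) := hΓpos _ (by positivity)
        calc Real.Gamma (α*k+1) * Real.Gamma (α*n+1)
            ≤ (α*(k:ℝ) + α*(n:ℝ) + 1) * Real.Gamma (α*(k:ℝ) + α*(n:ℝ) + 1) := hmul
          _ ≤ (((k:ℝ)+1) * ((n:ℝ)+1)) * Real.Gamma (α*((k+n:ℕ):ℝ)+1) := by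
              rw [← he2]; exact mul_le_mul_of_nonneg_right he1 hΓsum.le
          _ = ((k:ℝ)+1) * ((n:ℝ)+1) * Real.Gamma (α*((k+n:ℕ):ℝ)+1) := by ring
      have habs : |a k * c ^ n * (Real.Gamma (α * k + 1) / Real.Gamma (α * ((k+n:ℕ):ℝ) + 1))
          * t ^ (α * ((k+n:ℕ):ℝ))|
          = |a k| * |c| ^ n * (Real.Gamma (α * k + 1) / Real.Gamma (α * ((k+n:ℕ):ℝ) + 1))
            * t ^ (α * ((k+n:ℕ):ℝ)) := by
        rw [abs_mul, abs_mul, abs_mul, abs_pow,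
          abs_of_pos (div_pos hΓk hΓkn), abs_of_pos (Real.rpow_pos_of_pos ht0 _)]
      push_cast at habs htkn hratio ⊢
      rw [habs, htkn]
      have ht1 : (0:ℝ) < t ^ (α*(k:ℝ)) := Real.rpow_pos_of_pos ht0 _
      have ht2 : (0:ℝ) < t ^ (α*(n:ℝ)) := Real.rpow_pos_of_pos ht0 _
      refine le_trans (mul_le_mul_of_nonneg_right
        (mul_le_mul_of_nonneg_left hratio (by positivity))
        (mul_nonneg ht1.le ht2.le)) (le_of_eq ?_)
      field_simp
      skip
  have hGA : Summable (fun p : ℕ × ℕ => |G p|) := by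
    apply Summable.of_nonneg_of_le (fun p => abs_nonneg _) hGabs
    refine hP'.mul_of_nonneg hQ' (Pi.le_def.2 fun k => by positivity)
      (Pi.le_def.2 fun n => by
        have := hΓpos (α*(n:ℝ)) (by positivity)
        positivity)
  have hGsum : Summable G := hGA.of_abs
  -- pointwise rewriting of the integrand on Ioc 0 t
  have hpoint : ∀ x ∈ Set.Ioc (0:ℝ) t,
      deriv f x * mittagLeffler α (c * (t - x) ^ α) = ∑' p : ℕ × ℕ, F p x := by
    intro x hx
    have hx0 : 0 < x := hx.1
    have hxb : x < b := lt_of_le_of_lt hx.2 htb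
    have htx0 : (0:ℝ) ≤ t - x := by linarith [hx.2]
    have hderiv : deriv f x = ∑' k : ℕ, d k x :=
      (deriv_f hα0 hα1 hb hf hconv hx0 hxb).deriv
    have hML : mittagLeffler α (c * (t - x) ^ α) = ∑' n : ℕ, e n x := by
      unfold mittagLeffler
      refine tsum_congr fun n => ?_
      simp only [he]
      rw [mul_pow, ← Real.rpow_natCast ((t - x) ^ α) n, ← Real.rpow_mul htx0]
    have hdx : Summable fun k : ℕ => ‖d k x‖ := by
      have hsum := (summable_P hα0 hconv hx0.le
        (show x < (t+b)/2 by linarith [hx.2]) hmid0 (by linarith)).mul_left (α / x)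
      apply Summable.of_nonneg_of_le (fun k => norm_nonneg _) _ hsum
      intro k
      simp only [hd, Real.norm_eq_abs]
      rw [abs_mul, abs_mul, abs_of_nonneg (by positivity : (0:ℝ) ≤ α * (k:ℝ)),
        abs_of_nonneg (Real.rpow_nonneg hx0.le _), Real.rpow_sub hx0, Real.rpow_one]
      have h1 : α * (k:ℝ) ≤ α * ((k:ℝ)+1) := by nlinarith [(Nat.cast_nonneg k : (0:ℝ) ≤ k)]
      calc |a k| * (α*(k:ℝ)) * (x ^ (α*(k:ℝ)) / x)
          ≤ |a k| * (α*((k:ℝ)+1)) * (x ^ (α*(k:ℝ)) / x) := by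
            apply mul_le_mul_of_nonneg_right
              (mul_le_mul_of_nonneg_left h1 (abs_nonneg _)) (by positivity)
        _ = α / x * (|a k| * ((k:ℝ)+1) * x ^ (α*(k:ℝ))) := by field_simp
    have hex : Summable fun n : ℕ => ‖e n x‖ := by
      apply Summable.of_nonneg_of_le (fun n => norm_nonneg _) _ hQ'
      intro n
      simp only [he, Real.norm_eq_abs]
      have hΓn : (0:ℝ) < Real.Gamma (α*(n:ℝ)+1) := hΓpos _ (by positivity)
      rw [abs_div, abs_mul, abs_pow, abs_of_nonneg (Real.rpow_nonneg htx0 _), abs_of_pos hΓn]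
      have h2 : (t-x) ^ (α*(n:ℝ)) ≤ t ^ (α*(n:ℝ)) :=
        Real.rpow_le_rpow htx0 (by linarith [hx.1]) (by positivity)
      have h3 : |c|^n * (t-x) ^ (α*(n:ℝ)) ≤ ((n:ℝ)+1) * |c|^n * t ^ (α*(n:ℝ)) := by
        calc |c|^n * (t-x) ^ (α*(n:ℝ)) ≤ |c|^n * t ^ (α*(n:ℝ)) :=
              mul_le_mul_of_nonneg_left h2 (by positivity)
          _ ≤ ((n:ℝ)+1) * (|c|^n * t ^ (α*(n:ℝ))) :=
              le_mul_of_one_le_left (by positivity)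
                (by linarith [(Nat.cast_nonneg n : (0:ℝ) ≤ n)])
          _ = ((n:ℝ)+1) * |c|^n * t ^ (α*(n:ℝ)) := by ring
      exact div_le_div_of_nonneg_right h3 hΓn.le
    rw [hderiv, hML, Summable.tsum_mul_tsum hdx.of_norm hex.of_norm
      (summable_mul_of_summable_norm hdx hex)]
  -- measurability
  have hmeas : ∀ p : ℕ × ℕ, AEStronglyMeasurable (F p) (volume.restrict (Set.Ioc 0 t)) := by
    rintro ⟨k, n⟩
    have c2 : Continuous fun x : ℝ => (t-x) ^ (α*(n:ℝ)) := by
      have hcn : Continuous fun y : ℝ => y ^ (α*(n:ℝ)) :=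
        continuous_iff_continuousAt.2 fun y =>
          Real.continuousAt_rpow_const y _ (Or.inr (by positivity))
      exact hcn.comp (continuous_const.sub continuous_id)
    have c1 : ContinuousOn (fun x : ℝ => x ^ (α*(k:ℝ)-1)) (Set.Ioc 0 t) := fun x hx =>
      (Real.continuousAt_rpow_const x _ (Or.inl hx.1.ne')).continuousWithinAt
    have hco : ContinuousOn (F (k, n)) (Set.Ioc 0 t) := by
      simp only [hF, hd, he]
      exact ((continuousOn_const.mul c1).mul
        (((continuous_const.mul c2).continuousOn).div_const _))
    exact hco.aestronglyMeasurable measurableSet_Ioc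
  -- F vanishes for k = 0
  have hF0 : ∀ (n : ℕ) (x : ℝ), F (0, n) x = 0 := by
    intro n x; simp [hF, hd]
  -- abs of F on the interval
  have hFa : ∀ (k n : ℕ), k ≠ 0 → ∀ x ∈ Set.Ioc (0:ℝ) t, |F (k,n) x| =
      (|a k| * (α*(k:ℝ)) * x ^ (α*(k:ℝ)-1)) *
        (|c|^n * (t-x) ^ (α*(n:ℝ)) / Real.Gamma (α*(n:ℝ)+1)) := by
    intro k n hk x hx
    have hΓn : (0:ℝ) < Real.Gamma (α*(n:ℝ)+1) := hΓpos _ (by positivity)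
    simp only [hF, hd, he]
    simp only [abs_mul, abs_div, abs_pow]
    rw [abs_of_nonneg hα0.le, Nat.abs_cast,
      abs_of_nonneg (Real.rpow_nonneg hx.1.le (α*(k:ℝ)-1)),
      abs_of_nonneg (Real.rpow_nonneg (by linarith [hx.2] : (0:ℝ) ≤ t - x) (α*(n:ℝ))),
      abs_of_pos hΓn]
  -- the lintegral of each term
  have hlint : ∀ p : ℕ × ℕ, (∫⁻ x in Set.Ioc 0 t, ‖F p x‖₊) = ENNReal.ofReal |G p| := by
    rintro ⟨k, n⟩
    by_cases hk : k = 0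
    · subst hk
      have : ∀ x : ℝ, (‖F (0, n) x‖₊ : ENNReal) = 0 := fun x => by
        simp [hF0 n x]
      simp only [this, lintegral_const, zero_mul]
      simp [hG]
    · have hΓn : (0:ℝ) < Real.Gamma (α*(n:ℝ)+1) := hΓpos _ (by positivity)
      have hΓk : (0:ℝ) < Real.Gamma (α*(k:ℝ)+1) := hΓpos _ (by positivity)
      have hΓkn : (0:ℝ) < Real.Gamma (α*((k+n:ℕ):ℝ)+1) := hΓpos _ (by positivity)
      have hInt : IntegrableOn (fun x => (|a k| * (α*(k:ℝ)) * x ^ (α*(k:ℝ)-1)) *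
          (|c|^n * (t-x) ^ (α*(n:ℝ)) / Real.Gamma (α*(n:ℝ)+1))) (Set.Ioc 0 t) volume :=
        (intervalIntegrable_iff_integrableOn_Ioc_of_le ht0.le).1
          (integrable_F hα0 ht0 |a k| hk)
      have step1 : (∫⁻ x in Set.Ioc 0 t, ‖F (k,n) x‖₊)
          = ∫⁻ x in Set.Ioc 0 t, ENNReal.ofReal ((|a k| * (α*(k:ℝ)) * x ^ (α*(k:ℝ)-1)) *
              (|c|^n * (t-x) ^ (α*(n:ℝ)) / Real.Gamma (α*(n:ℝ)+1))) := by
        apply lintegral_congr_ae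
        filter_upwards [ae_restrict_mem measurableSet_Ioc] with x hx
        rw [← enorm_eq_nnnorm, ← ofReal_norm, Real.norm_eq_abs, hFa k n hk x hx]
      have hnn : 0 ≤ᵐ[volume.restrict (Set.Ioc 0 t)]
          fun x => (|a k| * (α*(k:ℝ)) * x ^ (α*(k:ℝ)-1)) *
            (|c|^n * (t-x) ^ (α*(n:ℝ)) / Real.Gamma (α*(n:ℝ)+1)) := by
        filter_upwards [ae_restrict_mem measurableSet_Ioc] with x hx
        have h1 := Real.rpow_nonneg hx.1.le (α*(k:ℝ)-1)
        have h2 := Real.rpow_nonneg (show (0:ℝ) ≤ t-x by linarith [hx.2]) (α*(n:ℝ))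
        positivity
      rw [step1, ← ofReal_integral_eq_lintegral_ofReal hInt hnn]
      congr 1
      rw [← intervalIntegral.integral_of_le ht0.le, integral_F hα0 ht0 |a k| hk]
      simp only [hG, if_neg hk]
      simp only [abs_mul, abs_pow]
      rw [abs_of_pos (div_pos hΓk hΓkn), abs_of_pos (Real.rpow_pos_of_pos ht0 _)]
      push_cast
      ring
  -- swap integral and sum
  have hswap := integral_tsum (μ := volume.restrict (Set.Ioc (0:ℝ) t)) hmeas (by
    simp only [enorm_eq_nnnorm, hlint]
    rw [← ENNReal.ofReal_tsum_of_nonneg (fun p => abs_nonneg _) hGA]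
    exact ENNReal.ofReal_ne_top)
  -- value of each integral
  have hval : ∀ p : ℕ × ℕ, (∫ x in Set.Ioc (0:ℝ) t, F p x) = G p := by
    rintro ⟨k, n⟩
    by_cases hk : k = 0
    · subst hk
      rw [show F (0, n) = fun _ : ℝ => (0:ℝ) from funext fun x => hF0 n x]
      simp [hG]
    · rw [← intervalIntegral.integral_of_le ht0.le]
      have heval := integral_F (c := c) hα0 ht0 (a k) hk (n := n)
      simp only [hF, hd, he]
      rw [heval]
      simp only [hG, if_neg hk]
      push_cast
      ring
  -- rearrangement along antidiagonals
  set S : ℕ → ℝ := fun m => ∑ p ∈ Finset.HasAntidiagonal.antidiagonal m, G p with hS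
  have hσ : Summable (fun σ => G (Finset.HasAntidiagonal.sigmaAntidiagonalEquivProd σ)) :=
    (Equiv.summable_iff Finset.HasAntidiagonal.sigmaAntidiagonalEquivProd).2 hGsum
  have hSigEq : ∑' p : ℕ × ℕ, G p = ∑' m, S m := by
    rw [← Equiv.tsum_eq Finset.HasAntidiagonal.sigmaAntidiagonalEquivProd G, Summable.tsum_sigma hσ]
    exact tsum_congr fun m => Finset.tsum_subtype _ _
  have hSsum : Summable S := hσ.sigma.congr fun m => Finset.tsum_subtype _ _
  have hS0 : S 0 = 0 := by
    simp [hS, hG, Finset.Nat.antidiagonal_zero]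
  have hSm : ∀ m : ℕ, S (m+1) = (∑ k ∈ Finset.Icc 1 (m+1), a k * c ^ (m+1-k)
      * (Real.Gamma ((k:ℝ)*α+1) / Real.Gamma (((m+1:ℕ):ℝ)*α+1))) * t ^ (α*((m+1:ℕ):ℝ)) := by
    intro m
    have hsub : Finset.Icc 1 (m+1) ⊆ Finset.range (m+2) := by
      intro j hj
      simp only [Finset.mem_Icc] at hj
      simp only [Finset.mem_range]
      omega
    simp only [hS]
    rw [Finset.Nat.sum_antidiagonal_eq_sum_range_succ_mk,
      ← Finset.sum_subset hsub (by
        intro j hj hj'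
        simp only [Finset.mem_range] at hj
        simp only [Finset.mem_Icc] at hj'
        have hj0 : j = 0 := by omega
        subst hj0
        simp [hG]), Finset.sum_mul]
    apply Finset.sum_congr rfl
    intro j hj
    simp only [Finset.mem_Icc] at hj
    have hj0 : j ≠ 0 := by omega
    have hjadd : j + (m + 1 - j) = m + 1 := by omega
    simp only [hG, if_neg hj0, hjadd]
    rw [show α*((j:ℕ):ℝ)+1 = ((j:ℕ):ℝ)*α+1 from by ring,
      show α*(((m+1:ℕ)):ℝ)+1 = (((m+1:ℕ)):ℝ)*α+1 from by ring]
  -- final assembly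
  have hABC : ABC B 0 α f t = B / (1-α) * ∑' m, S m := by
    unfold ABC
    rw [← hc, intervalIntegral.integral_of_le ht0.le,
      setIntegral_congr_fun measurableSet_Ioc hpoint, hswap, tsum_congr hval, hSigEq]
  rw [hABC]
  have hRHS : ∑' m : ℕ, ((B / (1 - α)) * ∑ k ∈ Finset.Icc 1 (m+1), a k
        * (-α / (1 - α)) ^ (m+1-k)
        * (Real.Gamma ((k:ℝ)*α+1) / Real.Gamma ((((m:ℝ))+1)*α+1))) * t ^ (α*(((m:ℝ))+1))
      = B / (1-α) * ∑' m, S (m+1) := by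
    rw [← tsum_mul_left]
    refine tsum_congr fun m => ?_
    rw [hSm m, ← hc]
    push_cast
    ring
  push_cast
  rw [hRHS]
  congr 1
  rw [Summable.tsum_eq_zero_add hSsum, hS0, zero_add]
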